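/- Let Φ be an n×n real matrix such that Iₙ − Φ is invertible, let Θ be a diagonal n×n matrix with strictly positive diagonal entries, and let C = (Iₙ − Φ)⁻¹ Θ (Iₙ − Φ)⁻ᵀ. Let ι, α, β ∈ {1,…,n} be distinct. Assume: (i) ι is exogenous, i.e., Φ_{ιk} = 0 for all k ≠ ι; (ii) de(ι) ∩ pa(β) ⊆ {α, β} in the causal graph of Φ; (iii) C_{αι} ≠ 0; (iv) Φ_{ββ} ≠ 1. Then C_{βι} / C_{αι} = Φ_{βα} / (1 − Φ_{ββ}). -/

import Mathlib

open Matrix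

/-- Univariate instrumental process identification: if `ι` is exogenous,
`de(ι) ∩ pa(β) ⊆ {α, β}` in the causal graph of `Φ` (edge `i → j`, `i ≠ j`, iff
`Φ j i ≠ 0`), `C_{αι} ≠ 0` and `Φ_{ββ} ≠ 1`, then the normalized parameter
`Φ_{βα} / (1 - Φ_{ββ})` is identified by `C_{βι} / C_{αι}`, where
`C = (Iₙ - Φ)⁻¹ Θ (Iₙ - Φ)⁻ᵀ` is the integrated covariance. -/
theorem univariate_instrumental_process_identification
    {n : ℕ} (Φ Θ C : Matrix (Fin n) (Fin n) ℝ)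
    (hΦ : IsUnit (1 - Φ).det)
    (hΘdiag : Θ.IsDiag) (hΘpos : ∀ i, 0 < Θ i i)
    (hC : C = (1 - Φ)⁻¹ * Θ * ((1 - Φ)⁻¹)ᵀ)
    (edge : Fin n → Fin n → Prop)
    (hedge : ∀ i j, edge i j ↔ i ≠ j ∧ Φ j i ≠ 0)
    (ι α β : Fin n)
    (hια : ι ≠ α) (hιβ : ι ≠ β) (hαβ : α ≠ β)
    (hExo : ∀ k, k ≠ ι → Φ ι k = 0)
    (hDePa : ∀ v : Fin n, Relation.ReflTransGen edge ι v →
      (v = β ∨ edge v β) → v = α ∨ v = β)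
    (hCαι : C α ι ≠ 0)
    (hΦββ : Φ β β ≠ 1) :
    C β ι / C α ι = Φ β α / (1 - Φ β β) := by
  classical
  set A := (1 - Φ)⁻¹ with hA
  have hinv1 : (1 - Φ) * A = 1 := Matrix.mul_nonsing_inv _ hΦ
  have hinv2 : A * (1 - Φ) = 1 := Matrix.nonsing_inv_mul _ hΦ
  have hinj : Function.Injective ((1 - Φ).mulVec) := by
    intro u v huv
    have h := congrArg A.mulVec huv
    simpa [Matrix.mulVec_mulVec, hinv2, Matrix.one_mulVec] using h
  set S : Set (Fin n) := {k | Relation.ReflTransGen edge ι k} with hS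
  -- Key structural fact: the ι-column of A is supported on descendants of ι.
  have hAcol : ∀ k, k ∉ S → A k ι = 0 := by
    set U : Submodule ℝ (Fin n → ℝ) :=
      { carrier := {v | ∀ k, k ∉ S → v k = 0}
        add_mem' := fun {a b} ha hb k hk => by
          simp [ha k hk, hb k hk]
        zero_mem' := fun k hk => rfl
        smul_mem' := fun c a ha k hk => by
          simp [ha k hk] } with hU
    have hmaps : ∀ v ∈ U, (1 - Φ).mulVecLin v ∈ U := by
      intro v hv k hk
      show ∑ j, (1 - Φ) k j * v j = 0
      refine Finset.sum_eq_zero fun j _ => ?_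
      by_cases hj : j ∈ S
      · have hkj : k ≠ j := fun h => hk (h ▸ hj)
        have hΦkj : Φ k j = 0 := by
          by_contra hne
          exact hk (hj.tail ((hedge j k).mpr ⟨Ne.symm hkj, hne⟩))
        simp [Matrix.sub_apply, Matrix.one_apply, hkj, hΦkj]
      · simp [hv j hj]
    have hg : Function.Surjective ((1 - Φ).mulVecLin.restrict hmaps) := by
      rw [← LinearMap.injective_iff_surjective]
      intro a b hab
      apply Subtype.ext
      apply hinj
      have := congrArg Subtype.val hab
      simpa [LinearMap.restrict_apply, Matrix.mulVecLin_apply, Matrix.sub_mulVec] using this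
    have hιU : (Pi.single ι 1 : Fin n → ℝ) ∈ U := by
      intro k hk
      have hkι : k ≠ ι := fun h => hk (h ▸ Relation.ReflTransGen.refl)
      simp [Pi.single_eq_of_ne hkι]
    obtain ⟨y, hy⟩ := hg ⟨Pi.single ι 1, hιU⟩
    have h1 : (1 - Φ).mulVec (A.mulVec (Pi.single ι 1)) = Pi.single ι 1 := by
      rw [Matrix.mulVec_mulVec, hinv1, Matrix.one_mulVec]
    have h2 : (1 - Φ).mulVec (y : Fin n → ℝ) = Pi.single ι 1 := by
      have := congrArg Subtype.val hy
      simpa [LinearMap.restrict_apply, Matrix.mulVecLin_apply, Matrix.sub_mulVec] using this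
    have hxy : A.mulVec (Pi.single ι 1) = (y : Fin n → ℝ) :=
      hinj (h1.trans h2.symm)
    intro k hk
    have hy0 : (y : Fin n → ℝ) k = 0 := y.2 k hk
    have hmv : A.mulVec (Pi.single ι 1) k = A k ι := by
      simp [Matrix.mulVec_single]
    rw [← hxy] at hy0
    rw [hmv] at hy0
    exact hy0
  -- the ι row of A
  have hrow : ∀ j, (1 - Φ ι ι) * A ι j = (1 : Matrix (Fin n) (Fin n) ℝ) ι j := by
    intro j
    have h := congrFun (congrFun hinv1 ι) j
    rw [Matrix.mul_apply, Finset.sum_eq_single ι] at h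
    · simpa [Matrix.sub_apply, Matrix.one_apply] using h
    · intro k _ hk
      simp [Matrix.sub_apply, Matrix.one_apply, Ne.symm hk, hExo k hk]
    · simp
  have hAιι : (1 - Φ ι ι) * A ι ι = 1 := by
    have h := hrow ι
    rwa [Matrix.one_apply_eq] at h
  have hAιιne : A ι ι ≠ 0 := by
    intro h; rw [h, mul_zero] at hAιι; exact absurd hAιι (by norm_num)
  have hrow0 : ∀ j, j ≠ ι → A ι j = 0 := by
    intro j hj
    have h := hrow j
    rw [Matrix.one_apply_ne (Ne.symm hj)] at h
    have h1 : (1 - Φ ι ι) ≠ 0 := by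
      intro h0; rw [h0, zero_mul] at hAιι; exact absurd hAιι (by norm_num)
    exact (mul_eq_zero.mp h).resolve_left h1
  -- the formula for the ι column of C
  have hCform : ∀ v, C v ι = A v ι * Θ ι ι * A ι ι := by
    intro v
    rw [hC, Matrix.mul_apply, Finset.sum_eq_single ι]
    · rw [Matrix.mul_apply, Finset.sum_eq_single ι]
      · simp [Matrix.transpose_apply]
      · intro k _ hk
        simp [hΘdiag hk]
      · simp
    · intro j _ hj
      simp [Matrix.transpose_apply, hrow0 j hj]
    · simp
  -- the key identity from the β row of (1-Φ)A = 1
  have hkey : (1 - Φ β β) * A β ι = Φ β α * A α ι := by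
    have h := congrFun (congrFun hinv1 β) ι
    rw [Matrix.mul_apply, Finset.sum_eq_add_of_mem β α (Finset.mem_univ β)
      (Finset.mem_univ α) (Ne.symm hαβ)] at h
    · rw [Matrix.one_apply_ne (Ne.symm hιβ)] at h
      have hβα : (1 - Φ) β α = -Φ β α := by
        simp [Matrix.sub_apply, Matrix.one_apply, Ne.symm hαβ]
      have hββ : (1 - Φ) β β = 1 - Φ β β := by
        simp [Matrix.sub_apply, Matrix.one_apply]
      rw [hβα, hββ] at h
      linarith
    · intro k _ hk
      obtain ⟨hkβ, hkα⟩ := hk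
      by_cases hΦk : Φ β k = 0
      · simp [Matrix.sub_apply, Matrix.one_apply, Ne.symm hkβ, hΦk]
      · have he : edge k β := (hedge k β).mpr ⟨hkβ, hΦk⟩
        have hA0 : A k ι = 0 := by
          apply hAcol
          intro hreach
          rcases hDePa k hreach (Or.inr he) with h' | h'
          exacts [hkα h', hkβ h']
        simp [hA0]
  -- finish
  have hAαι : A α ι ≠ 0 := by
    intro h
    apply hCαι
    rw [hCform α, h, zero_mul, zero_mul]
  have h1Φ : (1 : ℝ) - Φ β β ≠ 0 := sub_ne_zero.mpr (Ne.symm hΦββ)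
  have hdiv : C β ι / C α ι = A β ι / A α ι := by
    rw [hCform β, hCform α, mul_div_mul_right _ _ hAιιne,
      mul_div_mul_right _ _ (ne_of_gt (hΘpos ι))]
  rw [hdiv, div_eq_div_iff hAαι h1Φ]
  linarith [hkey]
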